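/- If a learner for a game type F equipped with a game semantics is step-bounded by b : 𝔻 → ℕ, then for every teacher (T, s₀, α) and every concept d ∈ 𝔻, the learner finds d within b(d) rounds (i.e., d is not still possible after b(d) rounds from the initial pair (q₀, s₀)). -/

import Mathlib

open CategoryTheory

universe u

/-- `d` is still possible after `n` rounds from a state pair `(q, s)`:
either `n = 0`, or the teacher's (semantically annotated) response to the
learner's query is a triple `((K, q'), s')` with `d ∈ K` and `d` still possible
after `n - 1` rounds from `(q', s')`. -/
def StillPossible {C T 𝔻 R : Type u} (F : Type u ⥤ Type u)
    (c : C → F.obj C)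
    (sem : (X : Type u) → F.obj X → F.obj (Set 𝔻 × X))
    (α : (X : Type u) → F.obj X → T → (R ⊕ X × T))
    (d : 𝔻) : ℕ → C × T → Prop
  | 0, _ => True
  | n + 1, (q, s) =>
      ∃ (K : Set 𝔻) (q' : C) (s' : T),
        α (Set 𝔻 × C) (sem C (c q)) s = Sum.inr ((K, q'), s') ∧
        d ∈ K ∧
        StillPossible F c sem α d n (q', s')

/-- If a learner is step-bounded by `b : 𝔻 → ℕ`, then for every teacher and
every concept `d`, the learner finds `d` within `b d` rounds. -/
theorem learner_correct
    (F : Type u ⥤ Type u) (C T 𝔻 R : Type u)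
    -- the learner
    (q₀ : C) (c : C → F.obj C)
    -- the game semantics
    (sem : (X : Type u) → F.obj X → F.obj (Set 𝔻 × X))
    (sem_law : ∀ (X : Type u) (Z : F.obj X), F.map (TypeCat.ofHom (Prod.snd : Set 𝔻 × X → X)) (sem X Z) = Z)
    -- the teacher
    (s₀ : T)
    (α : (X : Type u) → F.obj X → T → (R ⊕ X × T))
    (α_natural : ∀ (X Y : Type u) (f : X → Y) (Z : F.obj X) (s : T),
      α Y (F.map (TypeCat.ofHom f) Z) s = Sum.map id (Prod.map f id) (α X Z s))
    -- the step-bound data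
    (b : 𝔻 → ℕ)
    (tick : C → ℕ) (allows : C → Set 𝔻)
    (h_init : allows q₀ = Set.univ)
    (h_tick : ∀ (q : C) (d : 𝔻), d ∈ allows q → tick q < b d)
    (h_step : ∀ (q : C) (d : 𝔻), d ∈ allows q →
      ∃ Z' : F.obj {p : Set 𝔻 × C // p ∈ {p : Set 𝔻 × C |
          d ∈ p.1 → d ∈ allows p.2 ∧ tick q < tick p.2}},
        F.map (TypeCat.ofHom Subtype.val) Z' = sem C (c q))
    (d : 𝔻) :
    ¬ StillPossible F c sem α d (b d) (q₀, s₀) := by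
  have key : ∀ n (q : C) (s : T), d ∈ allows q →
      StillPossible F c sem α d n (q, s) → tick q + n < b d := by
    intro n
    induction n with
    | zero => intro q s hq _; simpa using h_tick q d hq
    | succ n ih =>
      intro q s hq hsp
      obtain ⟨K, q', s', heq, hdK, hsp'⟩ := hsp
      obtain ⟨Z', hZ'⟩ := h_step q d hq
      have hα := α_natural _ _ Subtype.val Z' s
      rw [hZ', heq] at hα
      rcases hα' : α _ Z' s with r | ⟨⟨⟨K₂, q₂⟩, hp⟩, s₂⟩
      · rw [hα'] at hα; simp [Sum.map] at hα
      · rw [hα'] at hα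
        simp only [Sum.map, Sum.elim_inr, Function.comp_apply, Prod.map, id, Sum.inr.injEq, Prod.mk.injEq] at hα
        obtain ⟨⟨hK, hq'⟩, hs⟩ := hα
        have hd2 : d ∈ K₂ := by rw [← hK]; exact hdK
        obtain ⟨hall, htk⟩ := hp hd2
        subst hq'
        have := ih _ s' hall hsp'
        omega
  intro hsp
  have := key (b d) q₀ s₀ (by simp [h_init]) hsp
  omega
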